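/- If f has distribution function F and g has distribution function G, both with finite second moments and F continuous and strictly increasing, then the monotone transport T = G^{-1} ∘ F attains the optimal transport cost: ∫ (T(u) - u)^2 f(u) du = ∫_0^1 (F^{-1}(t) - G^{-1}(t))^2 dt. -/

import Mathlib

open MeasureTheory Set Filter Topology ENNReal NNReal

/-- The quantile function of a distribution function `F`: `F⁻¹(t) = inf {x : F x ≥ t}`. -/
noncomputable def quantile (F : ℝ → ℝ) (t : ℝ) : ℝ := sInf {x : ℝ | t ≤ F x}

/-- If `f` is a density with distribution function `F` (continuous, strictly increasing on its
support) and `G` is a distribution function, both with finite second moments, then the monotone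
transport `T = G⁻¹ ∘ F` attains the optimal transport cost:
`∫ (T(u) - u)² f(u) du = ∫_0^1 (F⁻¹(t) - G⁻¹(t))² dt`. -/
theorem monotone_transport_cost
    (f F G : ℝ → ℝ)
    (hFdens : ∀ x, F x = ∫ u in Iic x, f u)
    (hf0 : ∀ u, 0 ≤ f u) (hf1 : ∫ u, f u = 1)
    (hFcont : Continuous F)
    (hFstrict : StrictMonoOn F (Function.support f))
    (hGmono : Monotone G)
    (hm2f : Integrable (fun u => u ^ 2 * f u))
    (hm2G : IntegrableOn (fun t => (quantile G t) ^ 2) (Ioo (0 : ℝ) 1)) :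
    ∫ u, (quantile G (F u) - u) ^ 2 * f u
      = ∫ t in Ioo (0 : ℝ) 1, (quantile F t - quantile G t) ^ 2 := by
  classical
  -- f is integrable
  have hfInt : Integrable f := by
    by_contra h
    rw [integral_undef h] at hf1; norm_num at hf1
  have hf0' : 0 ≤ᵐ[volume] f := Eventually.of_forall hf0
  -- basic facts about F
  have hF0 : ∀ x, 0 ≤ F x := fun x => by
    rw [hFdens]; exact integral_nonneg fun u => hf0 u
  have hFmono : Monotone F := by
    intro x y hxy
    rw [hFdens, hFdens]
    exact setIntegral_mono_set hfInt.integrableOn (ae_restrict_of_ae hf0')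
      (HasSubset.Subset.eventuallyLE (Iic_subset_Iic.2 hxy))
  have hF1 : ∀ x, F x ≤ 1 := fun x => by
    rw [hFdens, ← hf1]
    exact setIntegral_le_integral hfInt hf0'
  -- limits of F along sequences
  have htop : Tendsto (fun n : ℕ => F n) atTop (𝓝 1) := by
    have h := (MeasureTheory.aecover_Iic (μ := (volume : Measure ℝ)) (l := atTop)
      (b := fun n : ℕ => (n : ℝ))
      tendsto_natCast_atTop_atTop).integral_tendsto_of_countably_generated hfInt
    rw [hf1] at h
    refine h.congr fun n => ?_
    rw [hFdens]
  have hbot : Tendsto (fun n : ℕ => F (-(n : ℝ))) atTop (𝓝 0) := by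
    have h1 : Tendsto (fun n : ℕ => ∫ x in Iic (-(n : ℝ)), f x) atTop
        (𝓝 (∫ x in ⋂ n : ℕ, Iic (-(n : ℝ)), f x)) :=
      tendsto_setIntegral_of_antitone (fun _ => measurableSet_Iic)
        (fun m n hmn => Iic_subset_Iic.2 (by push_cast; exact neg_le_neg (by exact_mod_cast hmn)))
        ⟨0, hfInt.integrableOn⟩
    have h2 : (⋂ n : ℕ, Iic (-(n : ℝ))) = ∅ := by
      ext x
      simp only [mem_iInter, mem_Iic, mem_empty_iff_false, iff_false]
      push_neg
      obtain ⟨n, hn⟩ := exists_nat_gt (-x)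
      exact ⟨n, by linarith⟩
    rw [h2] at h1
    simp only [Measure.restrict_empty, integral_zero_measure] at h1
    refine h1.congr fun n => ?_
    rw [hFdens]
  have hex_lt : ∀ t : ℝ, 0 < t → ∃ x : ℝ, F x < t := by
    intro t ht
    obtain ⟨n, hn⟩ := (hbot.eventually_lt_const ht).exists
    exact ⟨-(n : ℝ), hn⟩
  have hex_gt : ∀ t : ℝ, t < 1 → ∃ x : ℝ, t < F x := by
    intro t ht
    obtain ⟨n, hn⟩ := (htop.eventually_const_lt ht).exists
    exact ⟨(n : ℝ), hn⟩
  -- the measure with density f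
  set μ : Measure ℝ := volume.withDensity (fun u => ENNReal.ofReal (f u)) with hμdef
  have hμs : ∀ s : Set ℝ, MeasurableSet s → μ s = ENNReal.ofReal (∫ u in s, f u) := by
    intro s hs
    rw [hμdef, withDensity_apply _ hs,
      ← ofReal_integral_eq_lintegral_ofReal hfInt.integrableOn (ae_restrict_of_ae hf0')]
  have hμIic : ∀ x, μ (Iic x) = ENNReal.ofReal (F x) := fun x => by
    rw [hμs _ measurableSet_Iic, hFdens]
  have hμuniv : μ univ = 1 := by
    rw [hμs _ MeasurableSet.univ, Measure.restrict_univ, hf1, ENNReal.ofReal_one]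
  haveI : IsProbabilityMeasure μ := ⟨hμuniv⟩
  have habs : μ ≪ volume := withDensity_absolutelyContinuous _ _
  -- the key measure computation
  have hkey : ∀ t : ℝ, 0 ≤ t → t < 1 → μ {u | F u ≤ t} = ENNReal.ofReal t := by
    intro t ht0 ht1
    by_cases hS : {u | F u ≤ t}.Nonempty
    · obtain ⟨b, hb⟩ := hex_gt t ht1
      have hbdd : BddAbove {u | F u ≤ t} := by
        refine ⟨b, fun u hu => ?_⟩
        by_contra hub
        push_neg at hub
        exact absurd (le_trans (hFmono hub.le) hu) (not_le.2 hb)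
      have hSclosed : IsClosed {u | F u ≤ t} := isClosed_le hFcont continuous_const
      have haS : sSup {u | F u ≤ t} ∈ {u | F u ≤ t} := hSclosed.csSup_mem hS hbdd
      have hSeq : {u | F u ≤ t} = Iic (sSup {u | F u ≤ t}) := by
        refine subset_antisymm (fun u hu => le_csSup hbdd hu) (fun u hu => ?_)
        exact le_trans (hFmono hu) haS
      have hFat : F (sSup {u | F u ≤ t}) = t := by
        rcases eq_or_lt_of_le ht0 with h0 | h0
        · have := hF0 (sSup {u | F u ≤ t})
          have := haS
          simp only [mem_setOf_eq] at this
          linarith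
        · refine le_antisymm haS ?_
          by_contra hlt
          push_neg at hlt
          have h1 : ∀ᶠ x in 𝓝 (sSup {u | F u ≤ t}), F x < t :=
            (hFcont.tendsto _).eventually_lt_const hlt
          have h2 : ∀ᶠ x in 𝓝[>] (sSup {u | F u ≤ t}), F x < t :=
            h1.filter_mono nhdsWithin_le_nhds
          obtain ⟨x, hxt, hxa⟩ := (h2.and self_mem_nhdsWithin).exists
          exact absurd (le_csSup hbdd (le_of_lt hxt : F x ≤ t)) (not_le.2 hxa)
      rw [hSeq, hμIic, hFat]
    · rw [not_nonempty_iff_eq_empty] at hS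
      have ht0' : t = 0 := by
        rcases eq_or_lt_of_le ht0 with h0 | h0
        · exact h0.symm
        · obtain ⟨x, hx⟩ := hex_lt t h0
          rw [eq_empty_iff_forall_notMem] at hS
          exact absurd (le_of_lt hx : x ∈ {u | F u ≤ t}) (hS x)
      rw [hS, ht0']
      simp
  have hFmeas : Measurable F := hFcont.measurable
  haveI : IsProbabilityMeasure (μ.map F) := Measure.isProbabilityMeasure_map hFmeas.aemeasurable
  -- the pushforward of μ under F is uniform
  have hmap : μ.map F = volume.restrict (Ioc (0 : ℝ) 1) := by
    refine Measure.ext_of_Iic _ _ (fun t => ?_)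
    rw [Measure.map_apply hFmeas measurableSet_Iic, Measure.restrict_apply measurableSet_Iic]
    rcases lt_or_ge t 0 with ht | ht
    · have h1 : F ⁻¹' Iic t = ∅ := by
        ext u; simp only [mem_preimage, mem_Iic, mem_empty_iff_false, iff_false, not_le]
        exact lt_of_lt_of_le ht (hF0 u)
      have h2 : Iic t ∩ Ioc (0 : ℝ) 1 = ∅ := by
        ext x
        simp only [mem_inter_iff, mem_Iic, mem_Ioc, mem_empty_iff_false, iff_false, not_and]
        intro hx h; linarith
      rw [h1, h2]; simp
    rcases lt_or_ge t 1 with ht1 | ht1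
    · have h1 : F ⁻¹' Iic t = {u | F u ≤ t} := rfl
      have h2 : Iic t ∩ Ioc (0 : ℝ) 1 = Ioc 0 t := by
        ext x
        simp only [mem_inter_iff, mem_Iic, mem_Ioc]
        constructor
        · rintro ⟨hx, hx0, _⟩; exact ⟨hx0, hx⟩
        · rintro ⟨hx0, hx⟩; exact ⟨hx, hx0, by linarith⟩
      rw [h1, h2, hkey t ht ht1, Real.volume_Ioc]
      norm_num
    · have h1 : F ⁻¹' Iic t = univ := eq_univ_of_forall fun u => le_trans (hF1 u) ht1
      have h2 : Iic t ∩ Ioc (0 : ℝ) 1 = Ioc 0 1 := by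
        refine inter_eq_right.2 fun x hx => ?_
        exact le_trans hx.2 ht1
      rw [h1, h2, hμuniv, Real.volume_Ioc]
      norm_num
  -- a.e. facts
  have hae_sup : ∀ᵐ u ∂μ, f u ≠ 0 := by
    obtain hg := hfInt.1.aemeasurable
    set g := hg.mk f with hgdef
    have hgm : Measurable g := hg.measurable_mk
    have hfg : f =ᵐ[volume] g := hg.ae_eq_mk
    have hμeq : μ = volume.withDensity (fun u => ENNReal.ofReal (g u)) := by
      rw [hμdef]
      exact withDensity_congr_ae (hfg.mono fun x hx => by simp only [hx])
    have hμg : μ {u | g u = 0} = 0 := by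
      have hset : MeasurableSet {u : ℝ | g u = 0} := hgm (measurableSet_singleton 0)
      rw [hμeq, withDensity_apply _ hset]
      rw [setLIntegral_congr_fun hset
        (fun x (hx : g x = 0) => by simp [hx] : ∀ x, x ∈ {u | g u = 0} → ENNReal.ofReal (g x) = 0)]
      simp
    have h1 : ∀ᵐ u ∂μ, g u ≠ 0 := by
      rw [ae_iff]; simpa using hμg
    filter_upwards [h1, habs.ae_eq hfg] with u hu hu2
    rw [hu2]; exact hu
  have haeF : ∀ᵐ u ∂μ, 0 < F u := by
    have h0 : μ {u | F u ≤ 0} = 0 := by simpa using hkey 0 le_rfl one_pos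
    have : ∀ᵐ u ∂μ, ¬ (F u ≤ 0) := by
      rw [ae_iff]; simpa using h0
    filter_upwards [this] with u hu
    exact lt_of_not_ge hu
  -- a.e., quantile F (F u) = u
  have hq_le : ∀ u : ℝ, 0 < F u → quantile F (F u) ≤ u := by
    intro u hu
    obtain ⟨x0, hx0⟩ := hex_lt (F u) hu
    refine csInf_le ⟨x0, fun y hy => ?_⟩ (le_refl (F u))
    by_contra hyx
    push_neg at hyx
    exact absurd (le_trans hy (hFmono hyx.le)) (not_le.2 hx0)
  have haeq : ∀ᵐ u ∂μ, quantile F (F u) = u := by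
    set B : Set ℝ := {u | f u ≠ 0 ∧ 0 < F u ∧ quantile F (F u) ≠ u} with hBdef
    have hflat : ∀ u ∈ B, ∀ x ∈ Ioo (quantile F (F u)) u, f x = 0 := by
      intro u hu x hx
      have hFx : F x = F u := by
        obtain ⟨m, hm, hmx⟩ := exists_lt_of_csInf_lt (⟨u, le_refl (F u)⟩ : {x : ℝ | F u ≤ F x}.Nonempty) hx.1
        exact le_antisymm (hFmono hx.2.le) (le_trans hm (hFmono hmx.le))
      by_contra hfx
      exact absurd (hFstrict (Function.mem_support.2 hfx) (Function.mem_support.2 hu.1) hx.2)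
        (by rw [hFx]; exact lt_irrefl _)
    have hBsub : B ⊆ ⋃ r : ℚ, {u ∈ B | (r : ℝ) ∈ Ioo (quantile F (F u)) u} := by
      intro u hu
      have hqu : quantile F (F u) < u :=
        lt_of_le_of_ne (hq_le u hu.2.1) hu.2.2
      obtain ⟨r, hr1, hr2⟩ := exists_rat_btwn hqu
      exact mem_iUnion.2 ⟨r, hu, hr1, hr2⟩
    have hsub : ∀ r : ℚ, {u ∈ B | (r : ℝ) ∈ Ioo (quantile F (F u)) u}.Subsingleton := by
      intro r u1 hu1 u2 hu2
      by_contra hne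
      rcases lt_or_gt_of_ne hne with h12 | h12
      · have : u1 ∈ Ioo (quantile F (F u2)) u2 := ⟨lt_trans hu2.2.1 hu1.2.2, h12⟩
        exact hu1.1.1 (hflat u2 hu2.1 u1 this)
      · have : u2 ∈ Ioo (quantile F (F u1)) u1 := ⟨lt_trans hu1.2.1 hu2.2.2, h12⟩
        exact hu2.1.1 (hflat u1 hu1.1 u2 this)
    have hBcount : B.Countable :=
      Set.Countable.mono hBsub (Set.countable_iUnion fun r => (hsub r).countable)
    have hμB : μ B = 0 := habs (hBcount.measure_zero _)
    have hB' : ∀ᵐ u ∂μ, u ∉ B := by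
      rw [ae_iff]; simpa using hμB
    filter_upwards [hae_sup, haeF, hB'] with u h1 h2 h3
    by_contra hne
    exact h3 ⟨h1, h2, hne⟩
  -- monotonicity / measurability of quantiles
  have hqFmono : MonotoneOn (quantile F) (Ioo (0 : ℝ) 1) := by
    intro t1 h1 t2 h2 h12
    have hne2 : {x | t2 ≤ F x}.Nonempty := (hex_gt t2 h2.2).imp fun x hx => hx.le
    obtain ⟨x0, hx0⟩ := hex_lt t1 h1.1
    have hbdd1 : BddBelow {x | t1 ≤ F x} := by
      refine ⟨x0, fun y hy => ?_⟩
      by_contra hyx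
      push_neg at hyx
      exact absurd (le_trans hy (hFmono hyx.le)) (not_le.2 hx0)
    exact csInf_le_csInf hbdd1 hne2 (fun x hx => le_trans h12 hx)
  have hqF : AEMeasurable (quantile F) (volume.restrict (Ioo (0 : ℝ) 1)) :=
    aemeasurable_restrict_of_monotoneOn measurableSet_Ioo hqFmono
  -- quantile G is a.e.-measurable
  have hqG : AEMeasurable (quantile G) (volume : Measure ℝ) := by
    set A : Set ℝ := {t | ∀ x, G x < t} with hAdef
    set Bs : Set ℝ := {t | ∀ x, t ≤ G x} with hBsdef
    have hAoc : A.OrdConnected := by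
      refine ordConnected_def.2 fun t1 h1 t2 h2 z hz => ?_
      exact fun x => lt_of_lt_of_le (h1 x) hz.1
    have hBoc : Bs.OrdConnected := by
      refine ordConnected_def.2 fun t1 h1 t2 h2 z hz => ?_
      exact fun x => le_trans hz.2 (h2 x)
    have hCmeas : MeasurableSet ((A ∪ Bs)ᶜ) :=
      (hAoc.measurableSet.union hBoc.measurableSet).compl
    have hCmono : MonotoneOn (quantile G) ((A ∪ Bs)ᶜ) := by
      intro t1 h1 t2 h2 h12
      simp only [mem_compl_iff, mem_union, not_or, hAdef, hBsdef, mem_setOf_eq] at h1 h2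
      have hne2 : {x | t2 ≤ G x}.Nonempty := by
        obtain ⟨x, hx⟩ := not_forall.1 h2.1
        exact ⟨x, not_lt.1 hx⟩
      obtain ⟨x0, hx0⟩ := not_forall.1 h1.2
      push_neg at hx0
      have hbdd1 : BddBelow {x | t1 ≤ G x} := by
        refine ⟨x0, fun y hy => ?_⟩
        by_contra hyx
        push_neg at hyx
        exact absurd (le_trans hy (hGmono hyx.le)) (not_le.2 hx0)
      exact csInf_le_csInf hbdd1 hne2 (fun x hx => le_trans h12 hx)
    have h1 : AEMeasurable (quantile G) (volume.restrict ((A ∪ Bs)ᶜ)) :=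
      aemeasurable_restrict_of_monotoneOn hCmeas hCmono
    have h2 : AEMeasurable (quantile G) (volume.restrict ((A ∪ Bs)ᶜᶜ)) := by
      have hz : ∀ t ∈ (A ∪ Bs)ᶜᶜ, quantile G t = 0 := by
        intro t ht
        rw [compl_compl] at ht
        rcases ht with ht | ht
        · have : {x | t ≤ G x} = ∅ := by
            ext x
            simp only [mem_setOf_eq, mem_empty_iff_false, iff_false, not_le]
            exact ht x
          rw [quantile, this, Real.sInf_empty]
        · have : {x : ℝ | t ≤ G x} = univ := eq_univ_of_forall fun x => ht x
          rw [quantile, this]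
          exact Real.sInf_of_not_bddBelow
            (fun ⟨b, hb⟩ => absurd (hb (mem_univ (b - 1))) (by norm_num))
      exact aemeasurable_const.congr
        ((ae_restrict_of_forall_mem hCmeas.compl hz).mono fun x hx => hx.symm)
    rw [← Measure.restrict_add_restrict_compl (μ := (volume : Measure ℝ)) hCmeas]
    exact h1.add_measure h2
  -- strong measurability of the integrand on the pushforward
  have hsm : AEStronglyMeasurable (fun t => (quantile F t - quantile G t) ^ 2) (μ.map F) := by
    rw [hmap, ← Measure.restrict_congr_set (Ioo_ae_eq_Ioc (μ := (volume : Measure ℝ)) (a := (0:ℝ)) (b := 1))]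
    exact ((hqF.sub hqG.restrict).pow_const 2).aestronglyMeasurable
  -- change of variables
  have hfnn : AEMeasurable (fun u => (f u).toNNReal) (volume : Measure ℝ) :=
    measurable_real_toNNReal.comp_aemeasurable hfInt.1.aemeasurable
  calc
    ∫ u, (quantile G (F u) - u) ^ 2 * f u
        = ∫ u, (quantile G (F u) - u) ^ 2 ∂μ := by
          rw [hμdef]
          have : (fun u : ℝ => ENNReal.ofReal (f u))
              = fun u : ℝ => ((f u).toNNReal : ℝ≥0∞) := rfl
          rw [this, integral_withDensity_eq_integral_smul₀ hfnn]
          refine integral_congr_ae (ae_of_all _ fun u => ?_)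
          simp only [NNReal.smul_def, smul_eq_mul, Real.coe_toNNReal _ (hf0 u)]
          ring
    _ = ∫ u, (quantile F (F u) - quantile G (F u)) ^ 2 ∂μ := by
          refine integral_congr_ae (haeq.mono fun u hu => ?_)
          simp only [hu]; ring
    _ = ∫ t, (quantile F t - quantile G t) ^ 2 ∂(μ.map F) :=
          (integral_map hFmeas.aemeasurable hsm).symm
    _ = ∫ t in Ioc (0 : ℝ) 1, (quantile F t - quantile G t) ^ 2 := by rw [hmap]
    _ = ∫ t in Ioo (0 : ℝ) 1, (quantile F t - quantile G t) ^ 2 :=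
          integral_Ioc_eq_integral_Ioo
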